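/- arXiv:math/0303076 — 2 statements merged into one kernel-verified Lean document; each statement's English description precedes it below -/
import Mathlib

section
/- Let X be a pointed space and s₁ : X → ΩΣX the adjoint of the identity on ΣX (i.e., s₁(x) is the loop t ↦ [x,t]). Define s_n : Xⁿ → ΩΣX by s_n(x₁,…,x_n) = (⋯(s₁(x₁)·s₁(x₂))⋯)·s₁(x_n) using a loop multiplication on ΩΣX for which the constant loop is a strict unit. Then (s_n)_{n≥1} is a compatible sequence of invariant maps and hence induces a continuous map s : J(X) → ΩΣX. -/
open scoped unitInterval
noncomputable section
universe u v

variable {X : Type u} [TopologicalSpace X]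

/-- Free (unbased) homotopy between bare functions. -/
def Homotopic {A : Type*} {Z : Type*} [TopologicalSpace A] [TopologicalSpace Z]
    (f g : A → Z) : Prop :=
  ∃ H : unitInterval × A → Z,
    Continuous H ∧ (∀ a, H (0, a) = f a) ∧ ∀ a, H (1, a) = g a

def IsHomotopyEquiv {A B : Type*} [TopologicalSpace A] [TopologicalSpace B] (f : A → B) : Prop :=
  Continuous f ∧ ∃ g : B → A, Continuous g ∧
    Homotopic (fun a => g (f a)) id ∧ Homotopic (fun b => f (g b)) id

/-! ### James reduced product -/

open Classical in
/-- Delete all basepoint entries from a list. -/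
def jreduce (x0 : X) (l : List X) : List X := l.filter fun x => decide (x ≠ x0)

def JamesSetoid (x0 : X) : Setoid (List X) where
  r l l' := jreduce x0 l = jreduce x0 l'
  iseqv := ⟨fun _ => rfl, Eq.symm, Eq.trans⟩

/-- The James reduced product `J(X)`, with the quotient topology. -/
def James (x0 : X) : Type u := Quotient (JamesSetoid x0)

instance (x0 : X) : TopologicalSpace (James x0) :=
  inferInstanceAs (TopologicalSpace (Quotient (JamesSetoid x0)))

def James.mk (x0 : X) (l : List X) : James x0 := Quotient.mk (JamesSetoid x0) l

def James.pt (x0 : X) : James x0 := James.mk x0 []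

/-- The canonical map `ν_n : Xⁿ → J(X)`. -/
def nu (x0 : X) (n : ℕ) (v : Fin n → X) : James x0 := James.mk x0 (List.ofFn v)

/-- Concatenation product on `J(X)`. -/
def James.mul {x0 : X} (a b : James x0) : James x0 :=
  Quotient.liftOn₂ a b (fun l l' => James.mk x0 (l ++ l')) (by
    intro l1 l2 l1' l2' h1 h2
    apply Quotient.sound
    show jreduce x0 _ = jreduce x0 _
    have h1' : jreduce x0 l1 = jreduce x0 l1' := h1
    have h2' : jreduce x0 l2 = jreduce x0 l2' := h2
    simp only [jreduce, List.filter_append]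
    unfold jreduce at h1' h2'
    rw [h1', h2'])

/-! ### Reduced suspension -/

def suspCollapsed (x0 : X) (p : X × I) : Prop := p.2 = 0 ∨ p.2 = 1 ∨ p.1 = x0

def SuspSetoid (x0 : X) : Setoid (X × I) where
  r p q := p = q ∨ (suspCollapsed x0 p ∧ suspCollapsed x0 q)
  iseqv := by
    refine ⟨fun _ => Or.inl rfl, ?_, ?_⟩
    · rintro p q (rfl | ⟨h1, h2⟩)
      exacts [Or.inl rfl, Or.inr ⟨h2, h1⟩]
    · rintro p q r (rfl | ⟨h1, h2⟩) (rfl | ⟨h3, h4⟩)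
      exacts [Or.inl rfl, Or.inr ⟨h3, h4⟩, Or.inr ⟨h1, h2⟩, Or.inr ⟨h1, h4⟩]

/-- The reduced suspension `ΣX`. -/
def Susp (x0 : X) : Type u := Quotient (SuspSetoid x0)

instance (x0 : X) : TopologicalSpace (Susp x0) :=
  inferInstanceAs (TopologicalSpace (Quotient (SuspSetoid x0)))

def Susp.mk (x0 : X) (x : X) (t : I) : Susp x0 := Quotient.mk (SuspSetoid x0) (x, t)

def Susp.pt (x0 : X) : Susp x0 := Susp.mk x0 x0 0

open Classical in
/-- Suspension of a (pointed) map. -/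
def suspMap {Y : Type v} [TopologicalSpace Y] {x0 : X} (y0 : Y) (f : X → Y) :
    Susp x0 → Susp y0 := fun a =>
  Quotient.liftOn a
    (fun p => if suspCollapsed x0 p then Susp.pt y0 else Susp.mk y0 (f p.1) p.2)
    (by
      rintro p q (rfl | ⟨h1, h2⟩)
      · rfl
      · simp [h1, h2])

open Classical in
/-- Co-H sum of two maps out of a suspension (along the suspension coordinate). -/
def coHSum {x0 : X} {Z : Type v} [TopologicalSpace Z] (f g : Susp x0 → Z) :
    Susp x0 → Z := fun a =>
  Quotient.liftOn a
    (fun p =>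
      if suspCollapsed x0 p then f (Susp.pt x0)
      else if h : (p.2 : ℝ) ≤ 1 / 2 then
        f (Susp.mk x0 p.1 ⟨2 * (p.2 : ℝ), Set.mem_Icc.mpr ⟨by linarith [p.2.2.1], by linarith⟩⟩)
      else g (Susp.mk x0 p.1
        ⟨2 * (p.2 : ℝ) - 1, Set.mem_Icc.mpr ⟨by linarith [not_le.mp h], by linarith [p.2.2.2]⟩⟩))
    (by
      rintro p q (rfl | ⟨h1, h2⟩)
      · rfl
      · simp [h1, h2])

open Classical in
/-- Co-H inverse of a map out of a suspension. -/
def coHNeg {x0 : X} {Z : Type v} [TopologicalSpace Z] (f : Susp x0 → Z) :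
    Susp x0 → Z := fun a =>
  Quotient.liftOn a
    (fun p => if suspCollapsed x0 p then f (Susp.pt x0)
      else f (Susp.mk x0 p.1 (unitInterval.symm p.2)))
    (by
      rintro p q (rfl | ⟨h1, h2⟩)
      · rfl
      · simp [h1, h2])

/-- `s₁ : X → ΩΣX`, the adjoint of the identity of `ΣX`. -/
def sOne (x0 : X) (x : X) : Path (Susp.pt x0) (Susp.pt x0) where
  toFun t := Susp.mk x0 x t
  continuous_toFun := by
    exact Continuous.comp continuous_quotient_mk' (Continuous.prodMk continuous_const continuous_id)
  source' := Quotient.sound (Or.inr ⟨Or.inl rfl, Or.inl rfl⟩)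
  target' := Quotient.sound (Or.inr ⟨Or.inr (Or.inl rfl), Or.inl rfl⟩)

lemma collapsed_eval (x0 : X) (p : Path (Susp.pt x0) (Susp.pt x0) × I)
    (h : suspCollapsed (Path.refl (Susp.pt x0)) p) : p.1 p.2 = Susp.pt x0 := by
  rcases h with h | h | h
  · rw [h]; exact p.1.source
  · rw [h]; exact p.1.target
  · rw [h]; rfl

/-- The evaluation map `e : ΣΩΣX → ΣX`. -/
def evalMap (x0 : X) : Susp (Path.refl (Susp.pt x0)) → Susp x0 := fun a =>
  Quotient.liftOn a (fun p => p.1 p.2)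
    (by
      rintro p q (rfl | ⟨h1, h2⟩)
      · rfl
      · show p.1 p.2 = q.1 q.2
        rw [collapsed_eval x0 p h1, collapsed_eval x0 q h2])

/-! ### Smash product -/

def smashCollapsed {Y : Type v} (x0 : X) (y0 : Y) (p : X × Y) : Prop :=
  p.1 = x0 ∨ p.2 = y0

def SmashSetoid {Y : Type v} [TopologicalSpace Y] (x0 : X) (y0 : Y) : Setoid (X × Y) where
  r p q := p = q ∨ (smashCollapsed x0 y0 p ∧ smashCollapsed x0 y0 q)
  iseqv := by
    refine ⟨fun _ => Or.inl rfl, ?_, ?_⟩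
    · rintro p q (rfl | ⟨h1, h2⟩)
      exacts [Or.inl rfl, Or.inr ⟨h2, h1⟩]
    · rintro p q r (rfl | ⟨h1, h2⟩) (rfl | ⟨h3, h4⟩)
      exacts [Or.inl rfl, Or.inr ⟨h3, h4⟩, Or.inr ⟨h1, h2⟩, Or.inr ⟨h1, h4⟩]

/-- The smash product `X ∧ Y`. -/
def Smash' {Y : Type v} [TopologicalSpace Y] (x0 : X) (y0 : Y) : Type max u v :=
  Quotient (SmashSetoid x0 y0)

instance {Y : Type v} [TopologicalSpace Y] (x0 : X) (y0 : Y) :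
    TopologicalSpace (Smash' x0 y0) :=
  inferInstanceAs (TopologicalSpace (Quotient (SmashSetoid x0 y0)))

def Smash'.mk {Y : Type v} [TopologicalSpace Y] (x0 : X) (y0 : Y) (p : X × Y) :
    Smash' x0 y0 := Quotient.mk (SmashSetoid x0 y0) p

def Smash'.pt {Y : Type v} [TopologicalSpace Y] (x0 : X) (y0 : Y) : Smash' x0 y0 :=
  Smash'.mk x0 y0 (x0, y0)

end



section Aux
open Filter Topology
universe u v w

variable {X : Type u} [TopologicalSpace X]

lemma sOne_self' (x0 : X) : sOne x0 x0 = Path.refl (Susp.pt x0) := by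
  ext t
  exact Quotient.sound (Or.inr ⟨Or.inr (Or.inr rfl), Or.inl rfl⟩)

lemma foldl_jreduce' (x0 : X)
    (lm : Path (Susp.pt x0) (Susp.pt x0) → Path (Susp.pt x0) (Susp.pt x0) →
      Path (Susp.pt x0) (Susp.pt x0))
    (hre : ∀ γ, lm γ (Path.refl (Susp.pt x0)) = γ) :
    ∀ (l : List X) (acc : Path (Susp.pt x0) (Susp.pt x0)),
      ((jreduce x0 l).map (sOne x0)).foldl lm acc = (l.map (sOne x0)).foldl lm acc := by
  intro l
  induction l with
  | nil => intro acc; rfl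
  | cons a l ih =>
    intro acc
    by_cases h : a = x0
    · have hf : jreduce x0 (a :: l) = jreduce x0 l := by
        simp [jreduce, List.filter_cons, h]
      rw [hf, List.map_cons, List.foldl_cons, h, sOne_self', hre]
      exact ih acc
    · have hf : jreduce x0 (a :: l) = a :: jreduce x0 l := by
        simp [jreduce, List.filter_cons, h]
      rw [hf, List.map_cons, List.map_cons, List.foldl_cons, List.foldl_cons]
      exact ih (lm acc (sOne x0 a))

lemma insertNth_succ'' {β : Type w} {n : ℕ} (j : Fin (n + 1)) (a : β) (v : Fin (n + 1) → β) :
    Fin.insertNth j.succ a v =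
      Fin.cons (α := fun _ => β) (v 0) (Fin.insertNth (α := fun _ => β) j a (Fin.tail v)) := by
  funext k
  refine Fin.cases ?_ ?_ k
  · have h0 : Fin.insertNth (α := fun _ => β) j.succ a v 0 = v 0 := by
      have := Fin.insertNth_apply_succAbove (α := fun _ => β) j.succ a v 0
      rwa [Fin.succ_succAbove_zero] at this
    simpa using h0
  · intro m
    by_cases hm : m = j
    · subst hm
      rw [Fin.insertNth_apply_same]
      simp [Fin.insertNth_apply_same]
    · obtain ⟨k', rfl⟩ := Fin.exists_succAbove_eq hm
      rw [← Fin.succ_succAbove_succ, Fin.insertNth_apply_succAbove]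
      simp [Fin.insertNth_apply_succAbove, Fin.tail]

lemma jreduce_ofFn_insertNth' (x0 : X) :
    ∀ (n : ℕ) (i : Fin (n + 1)) (v : Fin n → X),
      jreduce x0 (List.ofFn (i.insertNth x0 v)) = jreduce x0 (List.ofFn v) := by
  intro n
  induction n with
  | zero =>
    intro i v
    have : i = 0 := Fin.ext (by omega)
    subst this
    simp [Fin.insertNth_zero', List.ofFn_succ, jreduce, List.filter_cons]
  | succ n ih =>
    intro i v
    refine Fin.cases ?_ ?_ i
    · rw [Fin.insertNth_zero']
      rw [List.ofFn_succ]
      simp only [Fin.cons_zero, Fin.cons_succ]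
      simp [jreduce, List.filter_cons]
    · intro j
      rw [insertNth_succ'']
      rw [List.ofFn_succ, List.ofFn_succ (f := v)]
      simp only [Fin.cons_zero, Fin.cons_succ]
      show jreduce x0 (v 0 :: _) = jreduce x0 (v 0 :: _)
      simp only [jreduce, List.filter_cons]
      have := ih j (Fin.tail v)
      unfold jreduce at this
      rw [show (List.ofFn fun i : Fin n => v i.succ) = List.ofFn (Fin.tail v) from rfl, ← this]

/-- Continuity of a two-variable left fold. -/
lemma continuous_foldl'' {Z : Type v} {W : Type w} [TopologicalSpace Z] [TopologicalSpace W]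
    {g : Z × W → Z} (hg : Continuous g) :
    Continuous fun p : Z × List W => p.2.foldl (fun a x => g (a, x)) p.1 := by
  rw [continuous_iff_continuousAt]
  rintro ⟨z, l⟩
  induction l generalizing z with
  | nil =>
    unfold ContinuousAt
    rw [nhds_prod_eq, nhds_nil, Filter.prod_pure, Filter.tendsto_map'_iff]
    exact tendsto_id
  | cons x xs ih =>
    unfold ContinuousAt
    have h2 : 𝓝 (x :: xs) = Filter.map (fun p : W × List W => p.1 :: p.2) (𝓝 x ×ˢ 𝓝 xs) := by
      refine le_antisymm ?_ List.tendsto_cons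
      have := (List.tendsto_cons_iff (f := fun l : List W => l)
        (b := Filter.map (fun p : W × List W => p.1 :: p.2) (𝓝 x ×ˢ 𝓝 xs))
        (a := x) (l := xs)).mpr Filter.tendsto_map
      exact Filter.tendsto_id'.mp this
    rw [nhds_prod_eq, h2, Filter.prod_map_right, Filter.tendsto_map'_iff]
    have hstep : Tendsto (fun q : Z × (W × List W) => (g (q.1, q.2.1), q.2.2))
        (𝓝 z ×ˢ (𝓝 x ×ˢ 𝓝 xs)) (𝓝 (g (z, x), xs)) := by
      rw [← nhds_prod_eq, ← nhds_prod_eq]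
      exact ((hg.comp (continuous_fst.prodMk (continuous_fst.comp continuous_snd))).prodMk
        (continuous_snd.comp continuous_snd)).continuousAt
    have htot := Filter.Tendsto.comp (ih (g (z, x))) hstep
    exact htot

lemma continuous_sOne' (x0 : X) : Continuous (sOne x0) := by
  rw [← Path.continuous_uncurry_iff]
  show Continuous fun p : X × I => Susp.mk x0 p.1 p.2
  exact continuous_quotient_mk'.comp (continuous_fst.prodMk continuous_snd)

end Aux

/-- the left-normed loop products `s_n` of `s₁` (with respect to a strictly
unital loop multiplication on `ΩΣX`) form a compatible sequence of invariant maps and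
induce `s : J(X) → ΩΣX`. -/
theorem sSeq_compatible_invariant {X : Type u} [TopologicalSpace X] (x0 : X)
    (lm : Path (Susp.pt x0) (Susp.pt x0) → Path (Susp.pt x0) (Susp.pt x0) →
      Path (Susp.pt x0) (Susp.pt x0))
    (hlm : Continuous fun p : Path (Susp.pt x0) (Susp.pt x0) × Path (Susp.pt x0) (Susp.pt x0) =>
      lm p.1 p.2)
    (hle : ∀ γ, lm (Path.refl (Susp.pt x0)) γ = γ)
    (hre : ∀ γ, lm γ (Path.refl (Susp.pt x0)) = γ) :
    (∀ (n : ℕ) (i : Fin (n + 1)) (v : Fin n → X),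
        ((List.ofFn (i.insertNth x0 v)).map (sOne x0)).foldl lm (Path.refl (Susp.pt x0)) =
          ((List.ofFn v).map (sOne x0)).foldl lm (Path.refl (Susp.pt x0))) ∧
      ∃ s : James x0 → Path (Susp.pt x0) (Susp.pt x0), Continuous s ∧
        ∀ l : List X,
          s (James.mk x0 l) = (l.map (sOne x0)).foldl lm (Path.refl (Susp.pt x0)) := by
  constructor
  · intro n i v
    rw [← foldl_jreduce' x0 lm hre (List.ofFn (i.insertNth x0 v)),
        ← foldl_jreduce' x0 lm hre (List.ofFn v), jreduce_ofFn_insertNth' x0 n i v]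
  · refine ⟨Quotient.lift
      (fun l : List X => (l.map (sOne x0)).foldl lm (Path.refl (Susp.pt x0))) ?_, ?_, fun l => rfl⟩
    · intro l l' h
      have h' : jreduce x0 l = jreduce x0 l' := h
      rw [← foldl_jreduce' x0 lm hre l, ← foldl_jreduce' x0 lm hre l', h']
    · refine Continuous.quotient_lift ?_ _
      have heq : (fun l : List X => (l.map (sOne x0)).foldl lm (Path.refl (Susp.pt x0))) =
          (fun p : Path (Susp.pt x0) (Susp.pt x0) × List X =>
            p.2.foldl (fun a x =>
              (fun q : Path (Susp.pt x0) (Susp.pt x0) × X => lm q.1 (sOne x0 q.2)) (a, x)) p.1) ∘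
            (fun l => (Path.refl (Susp.pt x0), l)) := by
        funext l
        simp [List.foldl_map, Function.comp]
      rw [heq]
      exact (continuous_foldl''
        (hlm.comp (continuous_fst.prodMk ((continuous_sOne' x0).comp continuous_snd)))).comp
        (continuous_const.prodMk continuous_id)
end

section
/- For n = 2: let X be an H-space (A₂-space). If the retraction r : J(X) → X is an H-map (A₂-map), then X admits an A₃-structure, i.e., its multiplication is homotopy associative. -/
open scoped unitInterval
/-- case `n = 2`: if the retraction `r : J(X) → X` of an H-space is an
H-map, then the multiplication of `X` is homotopy associative (i.e. `X` admits an
`A₃`-structure). -/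
theorem retraction_Hmap_implies_assoc {X : Type u} [TopologicalSpace X] (x0 : X)
    (μ : X → X → X) (hμ : Continuous fun p : X × X => μ p.1 p.2)
    (hl : ∀ x, μ x0 x = x) (hr : ∀ x, μ x x0 = x)
    (r : James x0 → X) (hrc : Continuous r)
    (hrdef : ∀ l : List X, r (James.mk x0 l) = l.foldl μ x0)
    (hH : Homotopic (fun p : James x0 × James x0 => r (James.mul p.1 p.2))
      (fun p : James x0 × James x0 => μ (r p.1) (r p.2))) :
    Homotopic (fun p : X × X × X => μ (μ p.1 p.2.1) p.2.2)
      (fun p : X × X × X => μ p.1 (μ p.2.1 p.2.2)) := by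
  obtain ⟨H, Hc, H0, H1⟩ := hH
  have hcons : ∀ {Y : Type u} [TopologicalSpace Y] {f : Y → X} {g : Y → List X},
      Continuous f → Continuous g → Continuous (fun y => f y :: g y) := by
    intro Y _ f g hf hg
    exact List.continuous_cons.comp (hf.prodMk hg)
  have hφ : Continuous (fun p : X × X × X =>
      ((James.mk x0 [p.1], James.mk x0 [p.2.1, p.2.2]) : James x0 × James x0)) := by
    apply Continuous.prodMk
    · exact continuous_quotient_mk'.comp (hcons continuous_fst continuous_const)
    · exact continuous_quotient_mk'.comp
        (hcons (continuous_fst.comp continuous_snd)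
          (hcons (continuous_snd.comp continuous_snd) continuous_const))
  refine ⟨fun q => H (q.1, (James.mk x0 [q.2.1], James.mk x0 [q.2.2.1, q.2.2.2])), ?_, ?_, ?_⟩
  · exact Hc.comp (continuous_fst.prodMk (hφ.comp continuous_snd))
  · intro p
    have := H0 (James.mk x0 [p.1], James.mk x0 [p.2.1, p.2.2])
    show H (0, James.mk x0 [p.1], James.mk x0 [p.2.1, p.2.2]) = _
    rw [this]
    show r (James.mk x0 [p.1, p.2.1, p.2.2]) = _
    rw [hrdef]
    simp [List.foldl, hl]
  · intro p
    have := H1 (James.mk x0 [p.1], James.mk x0 [p.2.1, p.2.2])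
    show H (1, James.mk x0 [p.1], James.mk x0 [p.2.1, p.2.2]) = _
    rw [this]
    show μ (r (James.mk x0 [p.1])) (r (James.mk x0 [p.2.1, p.2.2])) = _
    rw [hrdef, hrdef]
    simp [List.foldl, hl]
end
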